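/- arXiv:1612.08426 — 2 statements merged into one kernel-verified Lean document; each statement's English description precedes it below -/
import Mathlib

section
/- For the pendulum separatrix solution φ₀(θ) = 4·arctan(exp(θ)) − π, the Melnikov-type integral satisfies ∫_{−∞}^{∞} θ·sin(φ₀(θ))·φ₀'(θ) dθ = 4, the integrand being absolutely integrable on ℝ. -/
open Real MeasureTheory
open Filter

/-- The pendulum separatrix (heteroclinic) solution. -/
noncomputable def pendulumSeparatrix (θ : ℝ) : ℝ := 4 * Real.arctan (Real.exp θ) - Real.pi

lemma sep_hasDerivAt (θ : ℝ) :
    HasDerivAt pendulumSeparatrix (4 * Real.exp θ / (1 + Real.exp θ ^ 2)) θ := by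
  have h1 : HasDerivAt (fun t : ℝ => Real.arctan (Real.exp t))
      (1 / (1 + Real.exp θ ^ 2) * Real.exp θ) θ :=
    (Real.hasDerivAt_arctan (Real.exp θ)).comp θ (Real.hasDerivAt_exp θ)
  have h2 := (h1.const_mul 4).sub_const Real.pi
  exact h2.congr_deriv (by ring)

lemma sin_sep (θ : ℝ) :
    Real.sin (pendulumSeparatrix θ)
      = 4 * Real.exp θ * (Real.exp θ ^ 2 - 1) / (1 + Real.exp θ ^ 2) ^ 2 := by
  set x := Real.exp θ with hxdef
  have hx : (0:ℝ) < 1 + x ^ 2 := by positivity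
  have hs2 : Real.sqrt (1 + x ^ 2) ^ 2 = 1 + x ^ 2 := Real.sq_sqrt hx.le
  have hs0 : Real.sqrt (1 + x ^ 2) ≠ 0 := by positivity
  have : pendulumSeparatrix θ = 2 * (2 * Real.arctan x) - Real.pi := by
    unfold pendulumSeparatrix; ring
  rw [this, Real.sin_sub_pi, Real.sin_two_mul, Real.sin_two_mul, Real.cos_two_mul,
    Real.sin_arctan, Real.cos_arctan]
  field_simp
  have hs4 : Real.sqrt (1 + x ^ 2) ^ 4 = (1 + x ^ 2) ^ 2 := by rw [show (4:ℕ) = 2 * 2 from rfl, pow_mul, hs2]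
  rw [hs4, hs2]
  ring


noncomputable def melF (θ : ℝ) : ℝ :=
  2 * (Real.exp θ ^ 2 - 1) / (Real.exp θ ^ 2 + 1)
    - 8 * θ * Real.exp θ ^ 2 / (Real.exp θ ^ 2 + 1) ^ 2

noncomputable def melf (θ : ℝ) : ℝ :=
  16 * θ * Real.exp θ ^ 2 * (Real.exp θ ^ 2 - 1) / (Real.exp θ ^ 2 + 1) ^ 3

lemma melF_hasDerivAt (θ : ℝ) : HasDerivAt melF (melf θ) θ := by
  have hx : HasDerivAt (fun t : ℝ => Real.exp t ^ 2) (2 * Real.exp θ ^ 1 * Real.exp θ) θ := by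
    simpa using (Real.hasDerivAt_exp θ).fun_pow 2
  have hpos : (0:ℝ) < Real.exp θ ^ 2 + 1 := by positivity
  have hA := ((hx.sub_const 1).const_mul 2).div (hx.add_const 1) hpos.ne'
  have hB := (((hasDerivAt_id θ).const_mul 8).mul hx).div ((hx.add_const 1).fun_pow 2) (by positivity)
  have h := hA.sub hB
  refine h.congr_deriv ?_
  unfold melf
  simp only [Pi.mul_apply, id]
  field_simp
  ring

lemma aux_tendsto : Tendsto (fun s : ℝ => s * Real.exp (-(2 * s))) atTop (nhds 0) := by
  have h := (Real.tendsto_pow_mul_exp_neg_atTop_nhds_zero 1).comp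
    (tendsto_id.const_mul_atTop (two_pos (α := ℝ)))
  have h2 := h.const_mul (1/2 : ℝ)
  simp only [mul_zero] at h2
  refine h2.congr fun s => ?_
  simp [Function.comp]
  ring

lemma melF_top : Tendsto melF atTop (nhds 2) := by
  have hu : Tendsto (fun θ : ℝ => Real.exp θ ^ 2 + 1) atTop atTop := by
    apply tendsto_atTop_add_const_right
    exact (Real.tendsto_exp_atTop.atTop_mul_atTop₀ Real.tendsto_exp_atTop).congr
      (fun θ => (pow_two _).symm)
  have h1 : Tendsto (fun θ : ℝ => 2 * (Real.exp θ ^ 2 - 1) / (Real.exp θ ^ 2 + 1)) atTop (nhds 2) := by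
    have heq : ∀ θ : ℝ, 2 * (Real.exp θ ^ 2 - 1) / (Real.exp θ ^ 2 + 1)
        = 2 - 4 / (Real.exp θ ^ 2 + 1) := by
      intro θ
      have : (0:ℝ) < Real.exp θ ^ 2 + 1 := by positivity
      field_simp
      ring
    simp_rw [heq]
    have h0 : Tendsto (fun θ : ℝ => 4 / (Real.exp θ ^ 2 + 1)) atTop (nhds 0) := by
      simpa [div_eq_mul_inv] using (tendsto_inv_atTop_zero.comp hu).const_mul (4:ℝ)
    simpa using tendsto_const_nhds.sub h0
  have h2 : Tendsto (fun θ : ℝ => 8 * θ * Real.exp θ ^ 2 / (Real.exp θ ^ 2 + 1) ^ 2)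
      atTop (nhds 0) := by
    have hb : Tendsto (fun θ : ℝ => 8 * (θ * Real.exp (-(2*θ)))) atTop (nhds 0) := by
      simpa using aux_tendsto.const_mul (8:ℝ)
    refine squeeze_zero' ?_ ?_ hb
    · filter_upwards [eventually_ge_atTop (0:ℝ)] with θ hθ
      have := Real.exp_pos θ
      positivity
    · filter_upwards [eventually_ge_atTop (0:ℝ)] with θ hθ
      have he := Real.exp_pos θ
      have hsq : Real.exp θ ^ 2 = Real.exp (2*θ) := by
        rw [show (2:ℝ)*θ = ((2:ℕ):ℝ)*θ by norm_num, Real.exp_nat_mul]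
      have hrw : Real.exp (-(2*θ)) = 1 / Real.exp θ ^ 2 := by
        rw [Real.exp_neg, one_div, hsq]
      rw [hrw, div_le_iff₀ (by positivity), ← sub_nonneg]
      have hx0 : Real.exp θ ^ 2 ≠ 0 := by positivity
      have heq2 : 8*(θ*(1/Real.exp θ^2))*(Real.exp θ^2+1)^2 - 8*θ*Real.exp θ^2*1
          = 8*θ*((Real.exp θ^2+1)^2 - (Real.exp θ^2)^2 * 1)/(Real.exp θ^2) := by
        field_simp
      rw [mul_one] at heq2
      rw [heq2]
      apply div_nonneg _ (by positivity)
      have : (Real.exp θ^2+1)^2 - (Real.exp θ^2)^2 ≥ 0 := by nlinarith [sq_nonneg (Real.exp θ)]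
      nlinarith
  have := h1.sub h2
  rw [sub_zero] at this
  exact this

lemma melF_bot : Tendsto melF atBot (nhds (-2)) := by
  have hu : Tendsto (fun θ : ℝ => Real.exp θ ^ 2) atBot (nhds 0) := by
    have h := Real.tendsto_exp_atBot.pow 2
    norm_num at h
    exact h
  have h1 : Tendsto (fun θ : ℝ => 2 * (Real.exp θ ^ 2 - 1) / (Real.exp θ ^ 2 + 1))
      atBot (nhds (-2)) := by
    have hc : ContinuousAt (fun u : ℝ => 2 * (u - 1) / (u + 1)) 0 :=
      ContinuousAt.div (by fun_prop) (by fun_prop) (by norm_num)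
    have h := hc.tendsto.comp hu
    norm_num [Function.comp] at h
    exact h
  have hg : Tendsto (fun θ : ℝ => 8 * θ * Real.exp θ ^ 2) atBot (nhds 0) := by
    have h := ((aux_tendsto.const_mul (8:ℝ)).comp tendsto_neg_atBot_atTop).neg
    norm_num [Function.comp] at h
    refine h.congr fun θ => ?_
    have hsq : Real.exp θ ^ 2 = Real.exp (2*θ) := by
      rw [show (2:ℝ)*θ = ((2:ℕ):ℝ)*θ by norm_num, Real.exp_nat_mul]
    rw [hsq]
    ring_nf
  have h2 : Tendsto (fun θ : ℝ => 8 * θ * Real.exp θ ^ 2 / (Real.exp θ ^ 2 + 1) ^ 2)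
      atBot (nhds 0) := by
    refine tendsto_of_tendsto_of_tendsto_of_le_of_le' hg tendsto_const_nhds ?_ ?_
    · filter_upwards [eventually_le_atBot (0:ℝ)] with θ hθ
      have he := Real.exp_pos θ
      have hle : Real.exp θ ^ 2 / (Real.exp θ ^ 2 + 1) ^ 2 ≤ Real.exp θ ^ 2 := by
        rw [div_le_iff₀ (by positivity)]
        nlinarith [pow_pos he 2, mul_pos (pow_pos he 2) (pow_pos he 2)]
      have hmul := mul_le_mul_of_nonpos_left hle (by linarith : 8 * θ ≤ 0)
      calc 8 * θ * Real.exp θ ^ 2 = 8 * θ * Real.exp θ ^ 2 := rfl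
        _ ≤ 8 * θ * (Real.exp θ ^ 2 / (Real.exp θ ^ 2 + 1) ^ 2) := hmul
        _ = 8 * θ * Real.exp θ ^ 2 / (Real.exp θ ^ 2 + 1) ^ 2 := by ring
    · filter_upwards [eventually_le_atBot (0:ℝ)] with θ hθ
      have he := Real.exp_pos θ
      apply div_nonpos_of_nonpos_of_nonneg _ (by positivity)
      nlinarith
  have h := h1.sub h2
  norm_num at h
  exact h.congr fun θ => by unfold melF; ring

lemma melf_nonneg_pos : ∀ θ ∈ Set.Ioi (0:ℝ), 0 ≤ melf θ := by
  intro θ hθ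
  have hθ' : (0:ℝ) ≤ θ := (Set.mem_Ioi.1 hθ).le
  have he : (1:ℝ) ≤ Real.exp θ := Real.one_le_exp hθ'
  unfold melf
  apply div_nonneg _ (by positivity)
  have he0 := Real.exp_pos θ
  have h1 : (1:ℝ) ≤ Real.exp θ ^ 2 := by nlinarith
  have h2 : 0 ≤ θ * (Real.exp θ ^ 2 - 1) := mul_nonneg hθ' (by linarith)
  nlinarith [mul_nonneg h2 (pow_nonneg he0.le 2)]

lemma melf_nonneg_neg : ∀ θ : ℝ, θ ≤ 0 → 0 ≤ melf θ := by
  intro θ hθ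
  have he : Real.exp θ ≤ 1 := Real.exp_le_one_iff.2 hθ
  have he0 := Real.exp_pos θ
  unfold melf
  apply div_nonneg _ (by positivity)
  have h1 : Real.exp θ ^ 2 ≤ 1 := by nlinarith
  have h2 : 0 ≤ θ * (Real.exp θ ^ 2 - 1) := by
    nlinarith [mul_nonneg (neg_nonneg.2 hθ) (neg_nonneg.2 (by linarith : Real.exp θ ^ 2 - 1 ≤ 0))]
  nlinarith [mul_nonneg h2 (pow_nonneg (Real.exp_pos θ).le 2)]

lemma integrand_eq (θ : ℝ) :
    θ * Real.sin (pendulumSeparatrix θ) * deriv pendulumSeparatrix θ = melf θ := by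
  rw [(sep_hasDerivAt θ).deriv, sin_sep]
  unfold melf
  have := Real.exp_pos θ
  have h1 : (0:ℝ) < 1 + Real.exp θ ^ 2 := by positivity
  field_simp
  ring

lemma melF_zero : melF 0 = 0 := by
  unfold melF
  norm_num

/-- the Melnikov-type integral along the pendulum separatrix. -/
theorem pendulum_separatrix_melnikov_integral :
    Integrable (fun θ : ℝ => θ * Real.sin (pendulumSeparatrix θ) * deriv pendulumSeparatrix θ) ∧
    ∫ θ : ℝ, θ * Real.sin (pendulumSeparatrix θ) * deriv pendulumSeparatrix θ = 4 := by
  have heq : (fun θ : ℝ => θ * Real.sin (pendulumSeparatrix θ) * deriv pendulumSeparatrix θ)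
      = melf := funext integrand_eq
  rw [heq]
  have hIoi_int : IntegrableOn melf (Set.Ioi 0) :=
    integrableOn_Ioi_deriv_of_nonneg' (fun x _ => melF_hasDerivAt x) melf_nonneg_pos melF_top
  have hIoi_val : ∫ θ in Set.Ioi (0:ℝ), melf θ = 2 - melF 0 :=
    integral_Ioi_of_hasDerivAt_of_nonneg' (fun x _ => melF_hasDerivAt x) melf_nonneg_pos melF_top
  -- reflected function for the Iic side
  have hgderiv : ∀ x ∈ Set.Ici (0:ℝ), HasDerivAt (fun t => melF (-t)) (-(melf (-x))) x := by
    intro x _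
    simpa [Function.comp_def] using HasDerivAt.scomp x (melF_hasDerivAt (-x)) (hasDerivAt_neg x)
  have hgneg : ∀ x ∈ Set.Ioi (0:ℝ), -(melf (-x)) ≤ 0 := by
    intro x hx
    have := melf_nonneg_neg (-x) (by simpa using (Set.mem_Ioi.1 hx).le)
    linarith
  have hgtend : Filter.Tendsto (fun t : ℝ => melF (-t)) Filter.atTop (nhds (-2)) :=
    melF_bot.comp Filter.tendsto_neg_atTop_atBot
  have hcompInt : IntegrableOn (fun x : ℝ => -(melf (-x))) (Set.Ioi 0) :=
    integrableOn_Ioi_deriv_of_nonpos' hgderiv hgneg hgtend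
  have hcompInt' : IntegrableOn (fun x : ℝ => melf (-x)) (Set.Ioi 0) := by
    exact hcompInt.neg.congr (Filter.Eventually.of_forall fun x => by simp)
  have hIio : IntegrableOn melf (Set.Iio 0) := by
    have hiff := (MeasurePreserving.integrableOn_comp_preimage
      (Measure.measurePreserving_neg (volume : Measure ℝ))
      (Homeomorph.neg ℝ).measurableEmbedding (f := melf) (s := Set.Iio 0))
    have hpre : (Neg.neg : ℝ → ℝ) ⁻¹' Set.Iio 0 = Set.Ioi 0 := by
      ext x; simp
    rw [hpre] at hiff
    exact hiff.1 hcompInt'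
  have hIic : IntegrableOn melf (Set.Iic 0) := by
    rwa [integrableOn_Iic_iff_integrableOn_Iio]
  have hIic_val : ∫ θ in Set.Iic (0:ℝ), melf θ = melF 0 - (-2) :=
    integral_Iic_of_hasDerivAt_of_tendsto' (fun x _ => melF_hasDerivAt x) hIic melF_bot
  constructor
  · rw [← integrableOn_univ, ← Set.Iic_union_Ioi (a := (0:ℝ))]
    exact hIic.union hIoi_int
  · rw [← intervalIntegral.integral_Iic_add_Ioi hIic hIoi_int, hIic_val, hIoi_val, melF_zero]
    norm_num
end

section
/- Let λ > 0 and k ∈ ℤ. There exist ε₀ > 0 and C > 0 such that for every ε with 0 < ε < ε₀ there is a unique φ_k ∈ (π·k − 1, π·k + 1) satisfying the equilibrium equation sin(φ_k) − ε²·λ²/2 + (ε²/2)·sin(2·φ_k) = 0, and moreover |φ_k − π·k − (−1)^k·ε²·λ²/2| ≤ C·ε⁴. -/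
open Real

lemma abs_sub_sin_le (x : ℝ) (hx : |x| ≤ 1) : |x - Real.sin x| ≤ |x|^3/4 := by
  rcases lt_trichotomy x 0 with h | h | h
  · have hx1 : -x ≤ 1 := by rw [abs_of_neg h] at hx; linarith
    have h1 := Real.sin_lt (x := -x) (by linarith)
    have h2 := Real.sin_gt_sub_cube (x := -x) (by linarith)
    rw [Real.sin_neg] at h1 h2
    rw [abs_of_neg h, abs_of_nonpos (by nlinarith : x - Real.sin x ≤ 0)]
    nlinarith
  · simp [h]
  · have hx1 : x ≤ 1 := by rwa [abs_of_pos h] at hx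
    have h1 := Real.sin_lt h
    have h2 := Real.sin_gt_sub_cube h
    rw [abs_of_pos h, abs_of_nonneg (by nlinarith : 0 ≤ x - Real.sin x)]
    nlinarith

set_option maxHeartbeats 1000000 in
/-- for small ε there is a unique equilibrium of the unperturbed
parametric resonance equation in (πk − 1, πk + 1), and it satisfies
φ_k = πk + (−1)^k ε²λ²/2 + O(ε⁴). -/
theorem equilibria_existence_asymptotics
    (lam : ℝ) (hlam : 0 < lam) (k : ℤ) :
    ∃ ε₀ > 0, ∃ C > 0, ∀ ε : ℝ, 0 < ε → ε < ε₀ →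
      ∃ φk : ℝ, (φk ∈ Set.Ioo (Real.pi * k - 1) (Real.pi * k + 1) ∧
          Real.sin φk - ε ^ 2 * lam ^ 2 / 2 + (ε ^ 2 / 2) * Real.sin (2 * φk) = 0) ∧
        (∀ y : ℝ, y ∈ Set.Ioo (Real.pi * k - 1) (Real.pi * k + 1) →
          Real.sin y - ε ^ 2 * lam ^ 2 / 2 + (ε ^ 2 / 2) * Real.sin (2 * y) = 0 →
          y = φk) ∧
        |φk - Real.pi * k - (-1 : ℝ) ^ k * ε ^ 2 * lam ^ 2 / 2| ≤ C * ε ^ 4 := by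
  set s : ℝ := (-1:ℝ)^k with hs_def
  have hs : s = 1 ∨ s = -1 := by
    rcases Int.even_or_odd k with h | h
    · exact Or.inl h.neg_one_zpow
    · exact Or.inr h.neg_one_zpow
  have hsabs : |s| = 1 := by rcases hs with h|h <;> rw [h] <;> norm_num
  have hc1 : 0 < Real.cos 1 := Real.cos_one_pos
  have hc1' : Real.cos 1 ≤ 1 := Real.cos_le_one 1
  have hsin1 : 3/4 < Real.sin 1 := by
    have := Real.sin_gt_sub_cube one_pos
    nlinarith
  obtain ⟨M, hM_def⟩ : ∃ M : ℝ, M = lam^2 + 1 := ⟨_, rfl⟩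
  have hM : 0 < M := by rw [hM_def]; positivity
  refine ⟨Real.sqrt (Real.cos 1 / (2*M)), Real.sqrt_pos.2 (div_pos hc1 (by linarith)),
    M^3/4 + M, by nlinarith [pow_pos hM 3], ?_⟩
  intro ε hε hεlt
  have hεsq : ε^2 < Real.cos 1 / (2*M) := by
    have h1 : ε^2 < (Real.sqrt (Real.cos 1 / (2*M)))^2 := by
      apply pow_lt_pow_left₀ hεlt hε.le; norm_num
    rwa [Real.sq_sqrt (le_of_lt (div_pos hc1 (by linarith)))] at h1
  have hε2M : ε^2 * M < Real.cos 1 / 2 := by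
    have h' := (lt_div_iff₀ (by linarith : (0:ℝ) < 2*M)).1 hεsq
    nlinarith
  have hMge1 : (1:ℝ) ≤ M := by nlinarith
  have hε2small : ε^2 < 1/2 := by nlinarith
  have hεle1 : ε ≤ 1 := by nlinarith
  -- the shifted function
  set h : ℝ → ℝ := fun u => Real.sin u - s * (ε^2*lam^2/2) + s * (ε^2/2) * Real.sin (2*u)
    with hh_def
  have hcont : Continuous h := by
    apply Continuous.add
    · exact Real.continuous_sin.sub continuous_const
    · exact continuous_const.mul (Real.continuous_sin.comp (continuous_const.mul continuous_id))
  have hder : ∀ u : ℝ, HasDerivAt h (Real.cos u + s * ε^2 * Real.cos (2*u)) u := by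
    intro u
    have h1 : HasDerivAt (fun v : ℝ => Real.sin (2*v)) (Real.cos (2*u) * 2) u :=
      HasDerivAt.sin (by simpa using (hasDerivAt_id u).const_mul 2)
    have h2 := ((Real.hasDerivAt_sin u).sub_const (s * (ε^2*lam^2/2))).add
      (h1.const_mul (s * (ε^2/2)))
    exact h2.congr_deriv (by ring)
  have hmono : StrictMonoOn h (Set.Icc (-1:ℝ) 1) := by
    apply strictMonoOn_of_deriv_pos (convex_Icc _ _) hcont.continuousOn
    intro u hu
    rw [interior_Icc] at hu
    rw [(hder u).deriv]
    have hcos : Real.cos 1 ≤ Real.cos u := by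
      rw [← Real.cos_abs u]
      apply Real.cos_le_cos_of_nonneg_of_le_pi (abs_nonneg u)
        (by linarith [Real.pi_gt_three])
      exact abs_le.2 ⟨hu.1.le, hu.2.le⟩
    have hb : |s * ε^2 * Real.cos (2*u)| ≤ ε^2 := by
      rw [abs_mul, abs_mul, hsabs, one_mul, abs_of_nonneg (sq_nonneg ε)]
      nlinarith [Real.abs_cos_le_one (2*u), abs_nonneg (Real.cos (2*u)), sq_nonneg ε]
    have := abs_le.1 hb
    nlinarith
  -- bounds on the perturbation terms
  have hb1 : |s * (ε^2*lam^2/2)| ≤ ε^2*lam^2/2 := by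
    rw [abs_mul, hsabs, one_mul, abs_of_nonneg (by positivity)]
  have hb2 : ∀ t : ℝ, |s * (ε^2/2) * Real.sin t| ≤ ε^2/2 := by
    intro t
    rw [abs_mul, abs_mul, hsabs, one_mul, abs_of_nonneg (by positivity : (0:ℝ) ≤ ε^2/2)]
    nlinarith [Real.abs_sin_le_one t, abs_nonneg (Real.sin t), sq_nonneg ε]
  have hsum : ε^2*lam^2/2 + ε^2/2 < Real.cos 1 / 2 := by
    have : ε^2*lam^2/2 + ε^2/2 = ε^2 * M / 2 := by rw [hM_def]; ring
    linarith [hε2M]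
  -- endpoint signs
  have hh1 : 0 < h 1 := by
    have e1 := abs_le.1 hb1
    have e2 := abs_le.1 (hb2 (2*1))
    simp only [hh_def]
    linarith
  have hh0 : h (-1) < 0 := by
    have e1 := abs_le.1 hb1
    have e2 := abs_le.1 (hb2 (2*(-1)))
    simp only [hh_def]
    rw [Real.sin_neg]
    linarith
  -- existence of the root of h
  obtain ⟨x, hxmem, hx0⟩ := intermediate_value_Ioo (by norm_num : (-1:ℝ) ≤ 1)
    hcont.continuousOn (Set.mem_Ioo.2 ⟨hh0, hh1⟩)
  obtain ⟨hxl, hxr⟩ := hxmem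
  -- key rewriting lemma
  have hkey : ∀ u : ℝ, Real.sin (Real.pi * k + u) - ε^2*lam^2/2
      + (ε^2/2) * Real.sin (2*(Real.pi * k + u)) = s * h u := by
    intro u
    have e1 : Real.pi * (k:ℝ) + u = u + (k:ℝ) * Real.pi := by ring
    have e2 : 2 * (u + (k:ℝ) * Real.pi) = 2*u + (k:ℝ) * (2*Real.pi) := by ring
    rw [e1, e2, Real.sin_add_int_mul_pi, Real.sin_add_int_mul_two_pi]
    simp only [hh_def]
    rw [← hs_def]
    rcases hs with h'|h' <;> rw [h'] <;> ring
  refine ⟨Real.pi * k + x, ⟨⟨by linarith, by linarith⟩, ?_⟩, ?_, ?_⟩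
  · rw [hkey x, hx0, mul_zero]
  · -- uniqueness
    intro y hy hy0
    obtain ⟨hyl, hyr⟩ := hy
    have hyu : y = Real.pi * k + (y - Real.pi * k) := by ring
    rw [hyu, hkey (y - Real.pi * k)] at hy0
    have hs0 : s ≠ 0 := by rcases hs with h'|h' <;> rw [h'] <;> norm_num
    have hhu : h (y - Real.pi * k) = 0 := by
      rcases mul_eq_zero.1 hy0 with h' | h'
      · exact absurd h' hs0
      · exact h'
    have hyIcc : y - Real.pi * k ∈ Set.Icc (-1:ℝ) 1 :=
      Set.mem_Icc.2 ⟨by linarith, by linarith⟩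
    have hxIcc : x ∈ Set.Icc (-1:ℝ) 1 := Set.mem_Icc.2 ⟨hxl.le, hxr.le⟩
    have := hmono.injOn hyIcc hxIcc (hhu.trans hx0.symm)
    linarith [this]
  · -- asymptotics
    have hx0' : Real.sin x - s * (ε^2*lam^2/2) + s * (ε^2/2) * Real.sin (2*x) = 0 := hx0
    have habs_x : |x| ≤ 1 := abs_le.2 ⟨hxl.le, hxr.le⟩
    have hcube := abs_sub_sin_le x habs_x
    have e1 := abs_le.1 hb1
    have e2 := abs_le.1 (hb2 (2*x))
    have hc2 := abs_le.1 hcube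
    have htri := abs_sub_abs_le_abs_sub x (Real.sin x)
    have hcube3 : |x|^3 ≤ |x| := by
      calc |x|^3 = |x| * |x|^2 := by ring
        _ ≤ |x| * 1 := mul_le_mul_of_nonneg_left (by nlinarith [abs_nonneg x]) (abs_nonneg x)
        _ = |x| := mul_one _
    -- |sin x| ≤ ε²λ²/2 + ε²/2 from the equation
    have hsinx : |Real.sin x| ≤ ε^2*lam^2/2 + ε^2/2 := by
      apply abs_le.2
      constructor <;> nlinarith
    have hxbound : |x| ≤ M * ε^2 := by
      have h1 : |x| ≤ |x|^3/4 + (ε^2*lam^2/2 + ε^2/2) := by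
        calc |x| ≤ |x - Real.sin x| + |Real.sin x| := by
              have := abs_sub_abs_le_abs_sub x (Real.sin x); linarith [abs_nonneg (Real.sin x)]
          _ ≤ |x|^3/4 + (ε^2*lam^2/2 + ε^2/2) := by linarith
      rw [hM_def]
      nlinarith [abs_nonneg x, hcube3, h1]
    -- the goal quantity
    have hterm : |s * (ε^2/2) * Real.sin (2*x)| ≤ ε^2 * |x| := by
      rw [abs_mul, abs_mul, hsabs, one_mul, abs_of_nonneg (by positivity : (0:ℝ) ≤ ε^2/2)]
      have h2x : |Real.sin (2*x)| ≤ 2 * |x| := by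
        have := Real.abs_sin_le_abs (x := 2*x)
        rwa [abs_mul, abs_two] at this
      nlinarith [abs_nonneg (Real.sin (2*x)), sq_nonneg ε]
    have heq : Real.pi * k + x - Real.pi * k - s * ε^2 * lam^2 / 2
        = (x - Real.sin x) - s * (ε^2/2) * Real.sin (2*x) := by
      linarith [hx0']
    rw [heq]
    have htot : |(x - Real.sin x) - s * (ε^2/2) * Real.sin (2*x)|
        ≤ |x|^3/4 + ε^2 * |x| := by
      calc |(x - Real.sin x) - s * (ε^2/2) * Real.sin (2*x)|
          ≤ |x - Real.sin x| + |s * (ε^2/2) * Real.sin (2*x)| := abs_sub _ _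
        _ ≤ |x|^3/4 + ε^2 * |x| := by linarith
    have h3 : |x|^3 ≤ (M*ε^2)^3 := pow_le_pow_left₀ (abs_nonneg x) hxbound 3
    have hε6 : ε^6 ≤ ε^4 := by
      calc ε^6 = ε^4 * ε^2 := by ring
        _ ≤ ε^4 * 1 := mul_le_mul_of_nonneg_left (by linarith) (pow_nonneg hε.le 4)
        _ = ε^4 := mul_one _
    have hMpos : (0:ℝ) < M := hM
    calc |(x - Real.sin x) - s * (ε^2/2) * Real.sin (2*x)|
        ≤ |x|^3/4 + ε^2 * |x| := htot
      _ ≤ (M*ε^2)^3/4 + ε^2 * (M*ε^2) := by linarith [h3, mul_le_mul_of_nonneg_left hxbound (sq_nonneg ε)]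
      _ = M^3 * ε^6 / 4 + M * ε^4 := by ring
      _ ≤ (M^3/4 + M) * ε^4 := by linarith [mul_le_mul_of_nonneg_left hε6 (le_of_lt (pow_pos hMpos 3))]
end
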